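/- Let n ≥ 2 and A be an n × n real matrix with a_{ij}a_{ji} ≥ 0 for all i ≠ j. Equality σ₁(A)·σ₁(A|1) = σ₂(A) + (n/(2(n−1)))·σ₁(A|1)² holds if and only if a_{22} = a_{33} = ⋯ = a_{nn} and a_{ij}a_{ji} = 0 for all i ≠ j. -/

import Mathlib

set_option maxHeartbeats 1000000 in
/-- Proposition 2.1 (equality case): for an `n × n` real matrix with
`a_{ij}a_{ji} ≥ 0` for `i ≠ j`, equality
`σ₁(A)·σ₁(A|1) = σ₂(A) + (n/(2(n−1)))·σ₁(A|1)²` holds if and only if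
`a_{22} = ⋯ = a_{nn}` and `a_{ij}a_{ji} = 0` for all `i ≠ j`. -/
theorem stmt2 (n : ℕ) (hn : 2 ≤ n) (A : Matrix (Fin n) (Fin n) ℝ)
    (hA : ∀ i j : Fin n, i ≠ j → 0 ≤ A i j * A j i) :
    ((∑ i, A i i) * (∑ i ∈ Finset.univ.filter (fun i : Fin n => i.val ≠ 0), A i i) =
      (∑ i, ∑ j, if i < j then A i i * A j j - A i j * A j i else 0)
      + (n : ℝ) / (2 * ((n : ℝ) - 1)) *
          (∑ i ∈ Finset.univ.filter (fun i : Fin n => i.val ≠ 0), A i i) ^ 2)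
    ↔ ((∀ i j : Fin n, i.val ≠ 0 → j.val ≠ 0 → A i i = A j j) ∧
       (∀ i j : Fin n, i ≠ j → A i j * A j i = 0)) := by
  haveI : NeZero n := ⟨by omega⟩
  have hm : (0:ℝ) < (n:ℝ) - 1 := by
    have : (2:ℝ) ≤ (n:ℝ) := by exact_mod_cast hn
    linarith
  set D : Finset (Fin n) := Finset.univ.filter (fun i : Fin n => i.val ≠ 0) with hDdef
  have hmemD : ∀ i : Fin n, i ∈ D ↔ i.val ≠ 0 := by
    intro i; simp [hDdef]
  have hDE : D = Finset.univ.erase 0 := by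
    ext i
    simp [hDdef, Finset.mem_erase, ne_eq, Fin.val_eq_zero_iff]
  set a := A 0 0 with ha
  set S := ∑ i ∈ D, A i i with hS
  set Q := ∑ i ∈ D, (A i i)^2 with hQ
  set M := ∑ i, ∑ j, (if i ≠ j then A i j * A j i else 0) with hM
  set W := ∑ i ∈ D, ∑ j ∈ D, (A i i - A j j)^2 with hW
  have hcard : (D.card : ℝ) = (n : ℝ) - 1 := by
    rw [hDE, Finset.card_erase_of_mem (Finset.mem_univ _), Finset.card_univ, Fintype.card_fin]
    have : 1 ≤ n := by omega
    push_cast [this]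
    ring
  have hT : (∑ i, A i i) = a + S := by
    rw [hS, hDE, ha]
    exact (Finset.add_sum_erase _ _ (Finset.mem_univ 0)).symm
  have hR : (∑ i, (A i i)^2) = a^2 + Q := by
    rw [hQ, hDE, ha]
    exact (Finset.add_sum_erase _ (fun i => (A i i)^2) (Finset.mem_univ 0)).symm
  -- symmetric-sum lemma
  have symsum : ∀ g : Fin n → Fin n → ℝ, (∀ i j, g i j = g j i) → (∀ i, g i i = 0) →
      2 * (∑ i, ∑ j, if i < j then g i j else 0) = ∑ i, ∑ j, g i j := by
    intro g hsym hdiag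
    have h1 : ∀ i j : Fin n, g i j
        = (if i < j then g i j else 0) + (if j < i then g i j else 0) := by
      intro i j
      rcases lt_trichotomy i j with h|h|h
      · simp [h, not_lt_of_gt h]
      · simp [h, hdiag]
      · simp [h, not_lt_of_gt h]
    have hsplit : (∑ i, ∑ j, g i j)
        = (∑ i, ∑ j, if i < j then g i j else 0)
          + (∑ i, ∑ j, if j < i then g i j else 0) := by
      rw [← Finset.sum_add_distrib]
      refine Finset.sum_congr rfl fun i _ => ?_
      rw [← Finset.sum_add_distrib]
      exact Finset.sum_congr rfl fun j _ => h1 i j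
    have hswap : (∑ i, ∑ j, if j < i then g i j else 0)
        = ∑ i, ∑ j, if i < j then g i j else 0 := by
      rw [Finset.sum_comm]
      refine Finset.sum_congr rfl fun i _ => Finset.sum_congr rfl fun j _ => ?_
      rw [hsym]
    linarith [hsplit, hswap]
  have hcross : ∑ i, ∑ j, A i j * A j i = (a^2 + Q) + M := by
    rw [← hR, hM]
    rw [← Finset.sum_add_distrib]
    refine Finset.sum_congr rfl fun i _ => ?_
    have : ∀ j : Fin n, A i j * A j i
        = (if i = j then (A i i)^2 else 0) + (if i ≠ j then A i j * A j i else 0) := by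
      intro j
      by_cases h : i = j
      · subst h; simp [sq]
      · simp [h]
    rw [Finset.sum_congr rfl fun j _ => this j, Finset.sum_add_distrib,
      Finset.sum_ite_eq Finset.univ i (fun _ => (A i i)^2)]
    simp
  have hσ : 2 * (∑ i, ∑ j, if i < j then A i i * A j j - A i j * A j i else 0)
      = (a + S)^2 - (a^2 + Q) - M := by
    rw [symsum (fun i j => A i i * A j j - A i j * A j i) (fun i j => by ring) (fun i => by ring)]
    have e1 : ∑ i, ∑ j, (A i i * A j j - A i j * A j i)
        = (∑ i, A i i) * (∑ j, A j j) - ∑ i, ∑ j, A i j * A j i := by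
      rw [Finset.sum_mul_sum, ← Finset.sum_sub_distrib]
      exact Finset.sum_congr rfl fun i _ => by rw [← Finset.sum_sub_distrib]
    rw [e1, hcross, hT]
    ring
  have hWval : W = 2*((n:ℝ)-1)*Q - 2*S^2 := by
    have exp : ∀ i ∈ D, ∑ j ∈ D, (A i i - A j j)^2
        = ((n:ℝ)-1) * (A i i)^2 - 2*S*(A i i) + Q := by
      intro i _
      have e : ∀ j : Fin n, (A i i - A j j)^2
          = (A i i)^2 - (2*(A i i))*(A j j) + (A j j)^2 := fun j => by ring
      rw [Finset.sum_congr rfl fun j _ => e j, Finset.sum_add_distrib,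
        Finset.sum_sub_distrib, Finset.sum_const, ← Finset.mul_sum, nsmul_eq_mul, hcard,
        ← hS, ← hQ]
      ring
    rw [hW, Finset.sum_congr rfl exp, Finset.sum_add_distrib, Finset.sum_sub_distrib,
      Finset.sum_const, ← Finset.mul_sum, ← Finset.mul_sum, nsmul_eq_mul, hcard, ← hS, ← hQ]
    ring
  -- key reduction
  have hσ' : (∑ i, ∑ j, if i < j then A i i * A j j - A i j * A j i else 0)
      = ((a + S)^2 - (a^2 + Q) - M)/2 := by linarith [hσ]
  have hne : (n:ℝ) - 1 ≠ 0 := ne_of_gt hm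
  have diff : (a+S)*S - ((((a+S)^2-(a^2+Q)-M)/2) + (n:ℝ)/(2*((n:ℝ)-1))*S^2)
      = ((2*((n:ℝ)-1)*Q - 2*S^2) + 2*((n:ℝ)-1)*M) / (4*((n:ℝ)-1)) := by
    field_simp
    ring
  have key : ((a+S) * S = (((a+S)^2-(a^2+Q)-M)/2) + (n:ℝ)/(2*((n:ℝ)-1))*S^2)
      ↔ W + 2*((n:ℝ)-1)*M = 0 := by
    rw [← sub_eq_zero (a := (a+S)*S), diff, div_eq_zero_iff, hWval]
    constructor
    · rintro (h | h)
      · linarith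
      · exfalso; linarith
    · intro h; left; linarith
  -- nonnegativity
  have hWnn : 0 ≤ W := by
    apply Finset.sum_nonneg; intro i _
    apply Finset.sum_nonneg; intro j _
    positivity
  have hMnn : 0 ≤ M := by
    apply Finset.sum_nonneg; intro i _
    apply Finset.sum_nonneg; intro j _
    by_cases h : i = j
    · simp [h]
    · simp only [ne_eq, h, not_false_iff, if_true]
      exact hA i j h
  rw [hT, hσ', key]
  constructor
  · intro h
    have hW0 : W = 0 := by nlinarith
    have hM0 : M = 0 := by nlinarith
    constructor
    · intro i j hi hj
      have hiD : i ∈ D := (hmemD i).2 hi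
      have hjD : j ∈ D := (hmemD j).2 hj
      have h1 := (Finset.sum_eq_zero_iff_of_nonneg (fun i _ =>
        Finset.sum_nonneg fun j _ => sq_nonneg _)).1 hW0 i hiD
      have h2 := (Finset.sum_eq_zero_iff_of_nonneg (fun j _ => sq_nonneg _)).1 h1 j hjD
      have := sq_eq_zero_iff.1 h2
      linarith [this]
    · intro i j hij
      have h1 := (Finset.sum_eq_zero_iff_of_nonneg (fun i _ =>
        Finset.sum_nonneg fun j _ => by
          by_cases h : i = j
          · simp [h]
          · simp only [ne_eq, h, not_false_iff, if_true]; exact hA i j h)).1 hM0 i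
        (Finset.mem_univ i)
      have h2 := (Finset.sum_eq_zero_iff_of_nonneg (fun j _ => by
          by_cases h : i = j
          · simp [h]
          · simp only [ne_eq, h, not_false_iff, if_true]; exact hA i j h)).1 h1 j
        (Finset.mem_univ j)
      simpa [hij] using h2
  · rintro ⟨h1, h2⟩
    have hW0 : W = 0 := by
      apply Finset.sum_eq_zero; intro i hi
      apply Finset.sum_eq_zero; intro j hj
      have := h1 i j ((hmemD i).1 hi) ((hmemD j).1 hj)
      simp [this]
    have hM0 : M = 0 := by
      apply Finset.sum_eq_zero; intro i _
      apply Finset.sum_eq_zero; intro j _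
      by_cases h : i = j
      · simp [h]
      · simp only [ne_eq, h, not_false_iff, if_true]; exact h2 i j h
    rw [hW0, hM0]; ring
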